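/- Let K ≥ 1 be an integer and let a, b ∈ ℝ^K with maximizer set π* = {i : a_i = max_{1≤j≤K} a_j}. Then the quantity max_{1≤i≤K}(a_i + b_i) − max_{i∈π*}(a_i + b_i) is non-negative and is bounded above by max_{1≤i≤K} b_i − max_{i∈π*} b_i. (Lemma 1, part II of the supplement.) -/

import Mathlib

/-- Lemma 1, part II (supplement): for `a, b ∈ ℝ^K` with maximizer set
`π* = {i : a i = max_j a j}`, the quantity
`max_i (a i + b i) - max_{i ∈ π*} (a i + b i)` is non-negative and bounded
above by `max_i b i - max_{i ∈ π*} b i`. -/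
theorem stmt_1 (K : ℕ) (hK : 1 ≤ K) (a b : Fin K → ℝ)
    (πs : Finset (Fin K))
    (hπ : πs = Finset.univ.filter fun i =>
      a i = Finset.univ.sup' ⟨⟨0, hK⟩, Finset.mem_univ _⟩ a)
    (hne : πs.Nonempty) :
    0 ≤ Finset.univ.sup' ⟨⟨0, hK⟩, Finset.mem_univ _⟩ (fun i => a i + b i)
        - πs.sup' hne (fun i => a i + b i) ∧
    Finset.univ.sup' ⟨⟨0, hK⟩, Finset.mem_univ _⟩ (fun i => a i + b i)
        - πs.sup' hne (fun i => a i + b i)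
      ≤ Finset.univ.sup' ⟨⟨0, hK⟩, Finset.mem_univ _⟩ b - πs.sup' hne b := by
  set M := Finset.univ.sup' ⟨⟨0, hK⟩, Finset.mem_univ _⟩ a with hM
  have haM : ∀ i ∈ πs, a i = M := by
    intro i hi
    rw [hπ] at hi
    exact (Finset.mem_filter.mp hi).2
  have h1 : πs.sup' hne (fun i => a i + b i) = πs.sup' hne (fun i => M + b i) :=
    Finset.sup'_congr hne rfl (fun i hi => by rw [haM i hi])
  have h2 : πs.sup' hne (fun i => M + b i) = M + πs.sup' hne b := by
    apply le_antisymm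
    · exact Finset.sup'_le _ _ fun i hi => add_le_add_right (Finset.le_sup' b hi) M
    · obtain ⟨j, hj, hjmax⟩ := Finset.exists_mem_eq_sup' hne b
      rw [hjmax]; exact Finset.le_sup' (fun i => M + b i) hj
  constructor
  · refine sub_nonneg.mpr (Finset.sup'_le hne _ fun i hi => ?_)
    exact Finset.le_sup' (fun i => a i + b i) (Finset.mem_univ i)
  · have hub : Finset.univ.sup' ⟨⟨0, hK⟩, Finset.mem_univ _⟩ (fun i => a i + b i)
        ≤ M + Finset.univ.sup' ⟨⟨0, hK⟩, Finset.mem_univ _⟩ b := by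
      apply Finset.sup'_le
      intro i hi
      exact add_le_add (Finset.le_sup' a hi) (Finset.le_sup' b hi)
    rw [h1, h2]
    linarith
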